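/- Let M² be a closed connected smooth surface, π : ℝ⁴ → ℝ³ a surjective linear map, and F, G : M² → ℝ⁴ immersions such that f = π ∘ F and g = π ∘ G are immersions (locally generic maps with no cross-cap points). If f and g are regularly homotopic through immersions of M² into ℝ³, then F ∼_π G: any regular homotopy between f and g lifts to a smooth homotopy H : M² × [0,1] → ℝ⁴ from F to G with every H_t an immersion and every π ∘ H_t an immersion. -/

import Mathlib

noncomputable section

open Set Function
open scoped Manifold

/-- The cross-cap (Whitney umbrella) normal form `(x₁, x₂) ↦ (x₁², x₂, x₁x₂)`. -/
def crossCapNF (x : EuclideanSpace ℝ (Fin 2)) : EuclideanSpace ℝ (Fin 3) :=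
  WithLp.toLp 2 (fun j => ![x 0 ^ 2, x 1, x 0 * x 1] j)

variable {M : Type*} [TopologicalSpace M] [ChartedSpace (EuclideanSpace ℝ (Fin 2)) M]

/-- `f : M² → ℝ³` has a cross-cap (Whitney umbrella) singularity at `p`: there are
local coordinate systems (smooth charts) centered at `p` and at `f p` in which `f`
takes the normal form `(x₁, x₂) ↦ (x₁², x₂, x₁x₂)`. -/
def IsCrossCapAt₂ (f : M → EuclideanSpace ℝ (Fin 3)) (p : M) : Prop :=
  ∃ (φ : PartialHomeomorph M (EuclideanSpace ℝ (Fin 2)))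
    (ψ : PartialHomeomorph (EuclideanSpace ℝ (Fin 3)) (EuclideanSpace ℝ (Fin 3))),
    p ∈ φ.source ∧ φ p = 0 ∧ f p ∈ ψ.source ∧ ψ (f p) = 0 ∧
    ContMDiffOn (𝓡 2) (𝓡 2) (⊤ : ℕ∞) φ φ.source ∧
    ContMDiffOn (𝓡 2) (𝓡 2) (⊤ : ℕ∞) φ.symm φ.target ∧
    ContMDiffOn (𝓡 3) (𝓡 3) (⊤ : ℕ∞) ψ ψ.source ∧
    ContMDiffOn (𝓡 3) (𝓡 3) (⊤ : ℕ∞) ψ.symm ψ.target ∧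
    ∀ x ∈ φ.source, f x ∈ ψ.source ∧ ψ (f x) = crossCapNF (φ x)

/-- The set `S(f)` of cross-cap points of `f : M² → ℝ³`. -/
def singularSet₂ (f : M → EuclideanSpace ℝ (Fin 3)) : Set M :=
  {p | IsCrossCapAt₂ f p}

/-- `f : M² → ℝ³` is locally generic: it is smooth and every point of `M²` is either a
regular point of `f` (the differential there is injective) or a cross-cap
singularity. -/
def IsLocallyGeneric₂ (f : M → EuclideanSpace ℝ (Fin 3)) : Prop :=
  ContMDiff (𝓡 2) (𝓡 3) (⊤ : ℕ∞) f ∧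
  ∀ p : M, Injective (mfderiv (𝓡 2) (𝓡 3) f p) ∨ IsCrossCapAt₂ f p

/-- `H : M² × [0,1] → ℝ³` is a regular homotopy from `f` to `g` through locally
generic maps: it is smooth on `M² × [0,1]`, `H₀ = f`, `H₁ = g`, and every stage `H_t`
is locally generic. -/
def IsRegularHomotopy₂ (f g : M → EuclideanSpace ℝ (Fin 3)) (H : M × ℝ → EuclideanSpace ℝ (Fin 3)) :
    Prop :=
  ContMDiffOn ((𝓡 2).prod 𝓘(ℝ, ℝ)) (𝓡 3) (⊤ : ℕ∞) H (univ ×ˢ Icc (0 : ℝ) 1) ∧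
  (∀ x, H (x, 0) = f x) ∧ (∀ x, H (x, 1) = g x) ∧
  ∀ t ∈ Icc (0 : ℝ) 1, IsLocallyGeneric₂ (fun x => H (x, t))

/-- Regular homotopy of immersions `M² → ℝ⁴`: a smooth homotopy all of whose stages
are immersions. -/
def ImmRegHomotopic4 (F G : M → EuclideanSpace ℝ (Fin 4)) : Prop :=
  ∃ H : M × ℝ → EuclideanSpace ℝ (Fin 4),
    ContMDiffOn ((𝓡 2).prod 𝓘(ℝ, ℝ)) (𝓡 4) (⊤ : ℕ∞) H (univ ×ˢ Icc (0 : ℝ) 1) ∧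
    (∀ x, H (x, 0) = F x) ∧ (∀ x, H (x, 1) = G x) ∧
    ∀ t ∈ Icc (0 : ℝ) 1, ∀ x,
      Injective (mfderiv (𝓡 2) (𝓡 4) (fun y => H (y, t)) x)

/-- `F ∼_π G`: there is a smooth homotopy `H : M² × [0,1] → ℝ⁴` from `F` to `G` such
that every stage `H_t` is an immersion and every projection `π ∘ H_t` is locally
generic. -/
def PiHomotopic (π : EuclideanSpace ℝ (Fin 4) →L[ℝ] EuclideanSpace ℝ (Fin 3))
    (F G : M → EuclideanSpace ℝ (Fin 4)) : Prop :=
  ∃ H : M × ℝ → EuclideanSpace ℝ (Fin 4),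
    ContMDiffOn ((𝓡 2).prod 𝓘(ℝ, ℝ)) (𝓡 4) (⊤ : ℕ∞) H (univ ×ˢ Icc (0 : ℝ) 1) ∧
    (∀ x, H (x, 0) = F x) ∧ (∀ x, H (x, 1) = G x) ∧
    ∀ t ∈ Icc (0 : ℝ) 1,
      (∀ x, Injective (mfderiv (𝓡 2) (𝓡 4) (fun y => H (y, t)) x)) ∧
      IsLocallyGeneric₂ (fun x => π (H (x, t)))

/-- let `F, G : M² → ℝ⁴` be immersions of a closed connected surface
and `π : ℝ⁴ → ℝ³` a surjective linear projection such that `f = π ∘ F` and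
`g = π ∘ G` are immersions (locally generic maps without cross-caps). If `f` and `g`
are regularly homotopic through immersions into `ℝ³`, then `F ∼_π G`; indeed any
regular homotopy `K` between `f` and `g` lifts to a smooth homotopy `H` from `F` to
`G` through immersions into `ℝ⁴` with `π ∘ H_t = K_t` (so that every `π ∘ H_t` is an
immersion). -/
theorem stmt16 [IsManifold (𝓡 2) (⊤ : ℕ∞) M] [CompactSpace M] [ConnectedSpace M]
    (π : EuclideanSpace ℝ (Fin 4) →L[ℝ] EuclideanSpace ℝ (Fin 3))
    (hπ : Surjective (⇑π)) (F G : M → EuclideanSpace ℝ (Fin 4))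
    (hF : ContMDiff (𝓡 2) (𝓡 4) (⊤ : ℕ∞) F ∧ ∀ x, Injective (mfderiv (𝓡 2) (𝓡 4) F x))
    (hG : ContMDiff (𝓡 2) (𝓡 4) (⊤ : ℕ∞) G ∧ ∀ x, Injective (mfderiv (𝓡 2) (𝓡 4) G x))
    (hf : IsLocallyGeneric₂ (fun x => π (F x)) ∧
      ∀ x, Injective (mfderiv (𝓡 2) (𝓡 3) (fun y => π (F y)) x))
    (hg : IsLocallyGeneric₂ (fun x => π (G x)) ∧
      ∀ x, Injective (mfderiv (𝓡 2) (𝓡 3) (fun y => π (G y)) x))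
    (K : M × ℝ → EuclideanSpace ℝ (Fin 3))
    (hK : ContMDiffOn ((𝓡 2).prod 𝓘(ℝ, ℝ)) (𝓡 3) (⊤ : ℕ∞) K (univ ×ˢ Icc (0 : ℝ) 1) ∧
      (∀ x, K (x, 0) = π (F x)) ∧ (∀ x, K (x, 1) = π (G x)) ∧
      ∀ t ∈ Icc (0 : ℝ) 1, ∀ x,
        Injective (mfderiv (𝓡 2) (𝓡 3) (fun y => K (y, t)) x)) :
    PiHomotopic π F G ∧
      ∃ H : M × ℝ → EuclideanSpace ℝ (Fin 4),
        ContMDiffOn ((𝓡 2).prod 𝓘(ℝ, ℝ)) (𝓡 4) (⊤ : ℕ∞) H (univ ×ˢ Icc (0 : ℝ) 1) ∧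
        (∀ x, H (x, 0) = F x) ∧ (∀ x, H (x, 1) = G x) ∧
        (∀ t ∈ Icc (0 : ℝ) 1, ∀ x,
          Injective (mfderiv (𝓡 2) (𝓡 4) (fun y => H (y, t)) x)) ∧
        ∀ t ∈ Icc (0 : ℝ) 1, ∀ x, π (H (x, t)) = K (x, t) := by
  classical
  -- choose a continuous linear right inverse of π
  obtain ⟨s, hs⟩ : ∃ s : EuclideanSpace ℝ (Fin 3) →L[ℝ] EuclideanSpace ℝ (Fin 4),
      ∀ y, π (s y) = y := by
    obtain ⟨s₀, hs₀⟩ := (π : EuclideanSpace ℝ (Fin 4) →ₗ[ℝ]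
      EuclideanSpace ℝ (Fin 3)).exists_rightInverse_of_surjective (LinearMap.range_eq_top.2 hπ)
    refine ⟨s₀.toContinuousLinearMap, fun y => ?_⟩
    simpa using LinearMap.congr_fun hs₀ y
  -- the lift
  set H : M × ℝ → EuclideanSpace ℝ (Fin 4) := fun p =>
    s (K p) + ((1 - p.2) • (F p.1 - s (π (F p.1))) + p.2 • (G p.1 - s (π (G p.1)))) with hHdef
  have hπH : ∀ p : M × ℝ, π (H p) = K p := by
    intro p
    simp [hHdef, hs, map_add, map_smul, map_sub]
  have hH0 : ∀ x, H (x, 0) = F x := by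
    intro x
    simp [hHdef, ← (hK.2.1 x)]
  have hH1 : ∀ x, H (x, 1) = G x := by
    intro x
    simp [hHdef, ← (hK.2.2.1 x)]
  -- smoothness of H on univ ×ˢ Icc 0 1
  have hsmooth : ContMDiffOn ((𝓡 2).prod 𝓘(ℝ, ℝ)) (𝓡 4) (⊤ : ℕ∞) H (univ ×ˢ Icc (0 : ℝ) 1) := by
    have h1 : ContMDiffOn ((𝓡 2).prod 𝓘(ℝ, ℝ)) (𝓡 4) (⊤ : ℕ∞) (fun p => s (K p))
        (univ ×ˢ Icc (0 : ℝ) 1) := s.contMDiff.comp_contMDiffOn hK.1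
    have hFc : ContMDiff ((𝓡 2).prod 𝓘(ℝ, ℝ)) (𝓡 4) (⊤ : ℕ∞)
        (fun p : M × ℝ => F p.1 - s (π (F p.1))) :=
      (hF.1.comp contMDiff_fst).sub
        ((s.contMDiff.comp (π.contMDiff.comp hF.1)).comp contMDiff_fst)
    have hGc : ContMDiff ((𝓡 2).prod 𝓘(ℝ, ℝ)) (𝓡 4) (⊤ : ℕ∞)
        (fun p : M × ℝ => G p.1 - s (π (G p.1))) :=
      (hG.1.comp contMDiff_fst).sub
        ((s.contMDiff.comp (π.contMDiff.comp hG.1)).comp contMDiff_fst)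
    have ht : ContMDiff ((𝓡 2).prod 𝓘(ℝ, ℝ)) 𝓘(ℝ, ℝ) (⊤ : ℕ∞) (fun p : M × ℝ => p.2) :=
      contMDiff_snd
    have h2 : ContMDiff ((𝓡 2).prod 𝓘(ℝ, ℝ)) (𝓡 4) (⊤ : ℕ∞)
        (fun p : M × ℝ => (1 - p.2) • (F p.1 - s (π (F p.1)))) :=
      (contMDiff_const.sub ht).smul hFc
    have h3 : ContMDiff ((𝓡 2).prod 𝓘(ℝ, ℝ)) (𝓡 4) (⊤ : ℕ∞)
        (fun p : M × ℝ => p.2 • (G p.1 - s (π (G p.1)))) := ht.smul hGc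
    exact h1.add (h2.add h3).contMDiffOn
  -- smoothness of each stage
  have hstage : ∀ t ∈ Icc (0 : ℝ) 1, ContMDiff (𝓡 2) (𝓡 4) (⊤ : ℕ∞) (fun x => H (x, t)) := by
    intro t ht
    have hslice : ContMDiff (𝓡 2) ((𝓡 2).prod 𝓘(ℝ, ℝ)) (⊤ : ℕ∞) (fun x : M => (x, t)) :=
      contMDiff_id.prodMk contMDiff_const
    have := hsmooth.comp (hslice.contMDiffOn (s := univ))
      (fun x _ => ⟨trivial, ht⟩)
    simpa [contMDiffOn_univ, Function.comp_def] using this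
  -- the projected stages equal the stages of K
  have hproj : ∀ t, (fun x => π (H (x, t))) = fun x => K (x, t) := by
    intro t; funext x; exact hπH (x, t)
  -- smoothness of each K-stage
  have hKstage : ∀ t ∈ Icc (0 : ℝ) 1, ContMDiff (𝓡 2) (𝓡 3) (⊤ : ℕ∞) (fun x => K (x, t)) := by
    intro t ht
    have hslice : ContMDiff (𝓡 2) ((𝓡 2).prod 𝓘(ℝ, ℝ)) (⊤ : ℕ∞) (fun x : M => (x, t)) :=
      contMDiff_id.prodMk contMDiff_const
    have := hK.1.comp (hslice.contMDiffOn (s := univ)) (fun x _ => ⟨trivial, ht⟩)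
    simpa [contMDiffOn_univ, Function.comp_def] using this
  -- injectivity of the derivatives of each stage
  have hinj : ∀ t ∈ Icc (0 : ℝ) 1, ∀ x,
      Injective (mfderiv (𝓡 2) (𝓡 4) (fun y => H (y, t)) x) := by
    intro t ht x
    have hKt := hK.2.2.2 t ht x
    have hHt := hstage t ht
    have hcomp : mfderiv (𝓡 2) (𝓡 3) (fun y => π (H (y, t))) x =
        (π : EuclideanSpace ℝ (Fin 4) →L[ℝ] EuclideanSpace ℝ (Fin 3)).comp
          (mfderiv (𝓡 2) (𝓡 4) (fun y => H (y, t)) x) := by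
      have h1 : MDifferentiableAt (𝓡 4) (𝓡 3) (⇑π) ((fun y => H (y, t)) x) :=
        π.mdifferentiableAt
      have h2 : MDifferentiableAt (𝓡 2) (𝓡 4) (fun y => H (y, t)) x :=
        (hHt x).mdifferentiableAt (by simp)
      have := mfderiv_comp x h1 h2
      rw [π.mfderiv_eq] at this
      exact this
    have : Injective (mfderiv (𝓡 2) (𝓡 3) (fun y => π (H (y, t))) x) := by
      rw [hproj t]; exact hKt
    rw [hcomp] at this
    exact Injective.of_comp (f := ⇑π) this
  refine ⟨⟨H, hsmooth, hH0, hH1, fun t ht => ⟨hinj t ht, ?_⟩⟩,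
    H, hsmooth, hH0, hH1, hinj, fun t ht x => hπH (x, t)⟩
  -- local genericity of π ∘ H_t
  rw [hproj t]
  exact ⟨hKstage t ht, fun p => Or.inl (hK.2.2.2 t ht p)⟩

end
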